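/- arXiv:2307.09116 — 16 statements merged into one kernel-verified Lean document; each statement's English description precedes it below -/
import Mathlib

section
/- For every mutually unbiased qubit measurement pair {Π_{b|y}}, there exist qubit states ρ_0, ρ_1, ρ_2 such that for all a,b,x,y ∈ {0,1}: P(a,b|x,y) = (1/2) · P_D^{00}(a|x) · Tr(Π_{b|y} ρ_0) + (1/4) · P_D^{10}(a|x) · Tr(Π_{b|y} ρ_1) + (1/4) · P_D^{11}(a|x) · Tr(Π_{b|y} ρ_2). In particular, the box P admits an LHV-LHS decomposition from Alice to Bob with hidden variable of dimension 3. -/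
open Matrix Kronecker ComplexOrder

noncomputable section

/-- The box `P(a,b|x,y)`:
`P(·|0,0) = (1/2, 1/4, 0, 1/4)`, `P(·|0,1) = (3/8, 3/8, 1/8, 1/8)`,
`P(·|1,0) = (1/4, 1/2, 1/4, 0)`, `P(·|1,1) = (3/8, 3/8, 1/8, 1/8)`. -/
def Pbox (a b x y : Fin 2) : ℝ :=
  if y = 1 then (if a = 0 then 3/8 else 1/8)
  else if x = 0 then
    (if a = 0 then (if b = 0 then 1/2 else 1/4) else (if b = 0 then 0 else 1/4))
  else
    (if a = 0 then (if b = 0 then 1/4 else 1/2) else (if b = 0 then 1/4 else 0))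

/-- Deterministic one-party box `P_D^{αβ}(a|x) = 1` iff `a = α·x ⊕ β`. -/
def PD (α β : Fin 2) (a x : Fin 2) : ℝ := if a = α * x + β then 1 else 0

/-- A conditional distribution (one-party box): `Q b y ≥ 0` and `Q 0 y + Q 1 y = 1`. -/
def IsCondDistrib (Q : Fin 2 → Fin 2 → ℝ) : Prop :=
  (∀ b y, 0 ≤ Q b y) ∧ ∀ y, Q 0 y + Q 1 y = 1

/-- A qubit state: a 2×2 complex positive semidefinite matrix of trace 1. -/
def IsQubitState (ρ : Matrix (Fin 2) (Fin 2) ℂ) : Prop :=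
  ρ.PosSemidef ∧ ρ.trace = 1

/-- A rank-one orthogonal projection on ℂ²: Hermitian, idempotent, trace 1. -/
def IsRankOneProj (M : Matrix (Fin 2) (Fin 2) ℂ) : Prop :=
  M.IsHermitian ∧ M * M = M ∧ M.trace = 1

/-- A mutually unbiased qubit measurement pair `{Π_{b|y}}`: for each input `y`,
`Π_{0|y}, Π_{1|y}` are rank-one orthogonal projections summing to the identity,
and `Tr(Π_{0|0} Π_{0|1}) = 1/2`. -/
def IsMUBPair (Meas : Fin 2 → Fin 2 → Matrix (Fin 2) (Fin 2) ℂ) : Prop :=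
  (∀ b y, IsRankOneProj (Meas b y)) ∧ (∀ y, Meas 0 y + Meas 1 y = 1) ∧
    (Meas 0 0 * Meas 0 1).trace = 1/2

/-- A Hermitian idempotent matrix is positive semidefinite. -/
lemma posSemidef_of_rankOneProj {M : Matrix (Fin 2) (Fin 2) ℂ}
    (h : IsRankOneProj M) : M.PosSemidef := by
  have : M = Mᴴ * M := by rw [h.1.eq, h.2.1]
  rw [this]
  exact Matrix.posSemidef_conjTranspose_mul_self M

/-- for every mutually unbiased qubit measurement pair there are
qubit states `ρ₀, ρ₁, ρ₂` giving an LHV–LHS decomposition of `P` with hidden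
variable of dimension 3. -/
theorem stmt_1 (Meas : Fin 2 → Fin 2 → Matrix (Fin 2) (Fin 2) ℂ)
    (hMeas : IsMUBPair Meas) :
    ∃ ρ0 ρ1 ρ2 : Matrix (Fin 2) (Fin 2) ℂ,
      IsQubitState ρ0 ∧ IsQubitState ρ1 ∧ IsQubitState ρ2 ∧
      ∀ a b x y : Fin 2, (Pbox a b x y : ℂ) =
        (1/2) * (PD 0 0 a x : ℂ) * (Meas b y * ρ0).trace
        + (1/4) * (PD 1 0 a x : ℂ) * (Meas b y * ρ1).trace
        + (1/4) * (PD 1 1 a x : ℂ) * (Meas b y * ρ2).trace := by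
  obtain ⟨hproj, hsum, hmub⟩ := hMeas
  have htr : ∀ b y, (Meas b y).trace = 1 := fun b y => (hproj b y).2.2
  have hidem : ∀ b y, Meas b y * Meas b y = Meas b y := fun b y => (hproj b y).2.1
  -- Meas 1 y = 1 - Meas 0 y
  have h1y : ∀ y, Meas 1 y = 1 - Meas 0 y := by
    intro y; exact eq_sub_of_add_eq' (hsum y)
  refine ⟨(1/2 : ℂ) • 1, Meas 0 0, Meas 1 0, ?_, ?_, ?_, ?_⟩
  · constructor
    · rw [Matrix.posSemidef_iff_dotProduct_mulVec]; constructor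
      · unfold Matrix.IsHermitian
        rw [Matrix.conjTranspose_smul, Matrix.conjTranspose_one]
        norm_num
      · intro v
        have : star v ⬝ᵥ ((1/2 : ℂ) • (1 : Matrix (Fin 2) (Fin 2) ℂ)) *ᵥ v
            = (1/2 : ℂ) * (star v ⬝ᵥ v) := by
          simp [Matrix.smul_mulVec, Matrix.one_mulVec, dotProduct_smul]
        rw [this]
        have h1 : 0 ≤ star v ⬝ᵥ v := dotProduct_star_self_nonneg v
        have h2 : (0:ℂ) ≤ (1/2 : ℂ) := by norm_num [Complex.le_def]
        exact mul_nonneg h2 h1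
    · simp [Matrix.trace_smul, Matrix.trace_one]
  · exact ⟨posSemidef_of_rankOneProj (hproj 0 0), htr 0 0⟩
  · exact ⟨posSemidef_of_rankOneProj (hproj 1 0), htr 1 0⟩
  · -- trace values
    have t0 : ∀ b y, (Meas b y * ((1/2 : ℂ) • 1)).trace = 1/2 := by
      intro b y
      rw [Matrix.mul_smul, Matrix.mul_one, Matrix.trace_smul, htr]
      simp
    have hcomm : (Meas 0 1 * Meas 0 0).trace = 1/2 := by
      rw [Matrix.trace_mul_comm]; exact hmub
    have t100 : (Meas 0 0 * Meas 0 0).trace = 1 := by rw [hidem, htr]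
    have t110 : (Meas 1 0 * Meas 0 0).trace = 0 := by
      rw [h1y, Matrix.sub_mul, Matrix.one_mul, Matrix.trace_sub, hidem, sub_self]
    have t101 : (Meas 0 1 * Meas 0 0).trace = 1/2 := hcomm
    have t111 : (Meas 1 1 * Meas 0 0).trace = 1/2 := by
      rw [h1y, Matrix.sub_mul, Matrix.one_mul, Matrix.trace_sub, htr, hcomm]
      norm_num
    have t200 : (Meas 0 0 * Meas 1 0).trace = 0 := by
      rw [h1y, Matrix.mul_sub, Matrix.mul_one, Matrix.trace_sub, hidem, sub_self]
    have t210 : (Meas 1 0 * Meas 1 0).trace = 1 := by rw [hidem, htr]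
    have t201 : (Meas 0 1 * Meas 1 0).trace = 1/2 := by
      rw [h1y, Matrix.mul_sub, Matrix.mul_one, Matrix.trace_sub, htr, hcomm]
      norm_num
    have t211 : (Meas 1 1 * Meas 1 0).trace = 1/2 := by
      rw [h1y 0, h1y 1, Matrix.sub_mul, Matrix.one_mul, Matrix.mul_sub,
        Matrix.mul_one, Matrix.trace_sub, Matrix.trace_sub, Matrix.trace_sub,
        Matrix.trace_one, htr, htr, hcomm]
      norm_num
    intro a b x y
    fin_cases a <;> fin_cases b <;> fin_cases x <;> fin_cases y <;>
      simp [Pbox, PD, htr, t0, t100, t110, t101, t111, t200, t210, t201, t211] <;>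
      norm_num [htr, t0, t100, t110, t101, t111, t200, t210, t201, t211]

end
end

section
/- There exist a mutually unbiased qubit measurement pair {Π_{a|x}} (for Alice's side), qubit states σ_0, σ_1, and conditional distributions B_0, B_1 for Bob such that for all a,b,x,y ∈ {0,1}: P(a,b|x,y) = (1/2) · Tr(Π_{a|x} σ_0) · B_0(b|y) + (1/2) · Tr(Π_{a|x} σ_1) · B_1(b|y). That is, the box P admits an LHS-LHV decomposition from Bob to Alice with hidden variable of dimension 2, so P is not superunsteerable from Bob to Alice. -/
open Matrix Kronecker ComplexOrder

noncomputable section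

/-- Z-basis and X-basis projectors. -/
def MyMeas (a x : Fin 2) : Matrix (Fin 2) (Fin 2) ℂ :=
  if x = 0 then (if a = 0 then !![1,0;0,0] else !![0,0;0,1])
  else (if a = 0 then !![1/2,1/2;1/2,1/2] else !![1/2,-(1/2);-(1/2),1/2])

lemma ps0 : (!![1,0;0,0] : Matrix (Fin 2) (Fin 2) ℂ).PosSemidef := by
  rw [Matrix.posSemidef_iff_dotProduct_mulVec]
  constructor
  · ext i j
    fin_cases i <;> fin_cases j <;> simp [Matrix.conjTranspose_apply]
  · intro x
    have h : star x ⬝ᵥ (!![1,0;0,0] : Matrix (Fin 2) (Fin 2) ℂ) *ᵥ x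
        = star (x 0) * x 0 := by
      simp [dotProduct, Matrix.mulVec, Fin.sum_univ_two]
    rw [h]; exact star_mul_self_nonneg _

lemma ps1 : (!![1/2,1/2;1/2,1/2] : Matrix (Fin 2) (Fin 2) ℂ).PosSemidef := by
  rw [Matrix.posSemidef_iff_dotProduct_mulVec]
  constructor
  · ext i j
    fin_cases i <;> fin_cases j <;> simp [Matrix.conjTranspose_apply]
  · intro x
    have h : star x ⬝ᵥ (!![1/2,1/2;1/2,1/2] : Matrix (Fin 2) (Fin 2) ℂ) *ᵥ x
        = (1/2 : ℂ) * (star (x 0 + x 1) * (x 0 + x 1)) := by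
      simp [dotProduct, Matrix.mulVec, Fin.sum_univ_two]
      ring
    rw [h]
    exact mul_nonneg (by rw [Complex.le_def]; norm_num) (star_mul_self_nonneg _)

/-- the box `P` admits an LHS–LHV decomposition from Bob to Alice
with hidden variable of dimension 2 (so `P` is not superunsteerable from Bob to
Alice). -/
theorem stmt_3 :
    ∃ (Meas : Fin 2 → Fin 2 → Matrix (Fin 2) (Fin 2) ℂ)
      (σ0 σ1 : Matrix (Fin 2) (Fin 2) ℂ) (B0 B1 : Fin 2 → Fin 2 → ℝ),
      IsMUBPair Meas ∧ IsQubitState σ0 ∧ IsQubitState σ1 ∧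
      IsCondDistrib B0 ∧ IsCondDistrib B1 ∧
      ∀ a b x y : Fin 2, (Pbox a b x y : ℂ) =
        (1/2) * (Meas a x * σ0).trace * (B0 b y : ℂ)
        + (1/2) * (Meas a x * σ1).trace * (B1 b y : ℂ) := by
  refine ⟨MyMeas, !![1,0;0,0], !![1/2,1/2;1/2,1/2],
    (fun b y => if y = 1 then 1/2 else if b = 0 then 1 else 0),
    (fun b y => if y = 1 then 1/2 else if b = 0 then 0 else 1),
    ⟨?_, ?_, ?_⟩, ⟨ps0, ?_⟩, ⟨ps1, ?_⟩, ⟨?_, ?_⟩, ⟨?_, ?_⟩, ?_⟩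
  · intro b y
    fin_cases b <;> fin_cases y <;>
      refine ⟨?_, ?_, ?_⟩ <;>
      first
      | (ext i j; fin_cases i <;> fin_cases j <;>
          simp [MyMeas, Matrix.conjTranspose_apply, Matrix.mul_apply,
            Fin.sum_univ_two] <;> try norm_num)
      | simp [MyMeas, Matrix.trace_fin_two] <;> try norm_num
  · intro y
    fin_cases y <;> (ext i j; fin_cases i <;> fin_cases j <;>
      simp [MyMeas, Matrix.one_apply] <;> try norm_num)
  · simp [MyMeas, Matrix.trace_fin_two, Matrix.mul_apply, Fin.sum_univ_two]
    try norm_num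
  · simp [Matrix.trace_fin_two]
  · simp [Matrix.trace_fin_two]; try norm_num
  · intro b y; fin_cases b <;> fin_cases y <;> try norm_num
  · intro y; fin_cases y <;> try norm_num
  · intro b y; fin_cases b <;> fin_cases y <;> try norm_num
  · intro y; fin_cases y <;> try norm_num
  · intro a b x y
    fin_cases a <;> fin_cases b <;> fin_cases x <;> fin_cases y <;>
      simp [Pbox, MyMeas, Matrix.trace_fin_two, Matrix.mul_apply,
        Fin.sum_univ_two] <;> try norm_num
end
end

section
/- There exist weights p(0), p(1) ≥ 0 with p(0) + p(1) = 1 and conditional distributions A_0, A_1 (for Alice) and B_0, B_1 (for Bob) such that P(a,b|x,y) = Σ_{λ∈{0,1}} p(λ) · A_λ(a|x) · B_λ(b|y) for all a,b,x,y ∈ {0,1}. That is, the box P admits a local-hidden-variable decomposition with hidden variable of dimension 2, so P is not superlocal. -/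
open Matrix Kronecker ComplexOrder

noncomputable section

/-- the box `P` admits a local-hidden-variable decomposition with
hidden variable of dimension 2 (so `P` is not superlocal). -/
theorem stmt_4 :
    ∃ (p : Fin 2 → ℝ) (A B : Fin 2 → Fin 2 → Fin 2 → ℝ),
      (∀ lam, 0 ≤ p lam) ∧ p 0 + p 1 = 1 ∧
      (∀ lam, IsCondDistrib (A lam)) ∧ (∀ lam, IsCondDistrib (B lam)) ∧
      ∀ a b x y : Fin 2, Pbox a b x y =
        ∑ lam : Fin 2, p lam * A lam a x * B lam b y := by
  refine ⟨fun _ => 1/2,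
    fun lam a x => if lam = 0 then
        (if x = 0 then (if a = 0 then 1 else 0) else 1/2)
      else (if x = 0 then 1/2 else (if a = 0 then 1 else 0)),
    fun lam b y => if y = 1 then 1/2
      else if lam = 0 then (if b = 0 then 1 else 0) else (if b = 0 then 0 else 1),
    fun _ => by norm_num, by norm_num, ?_, ?_, ?_⟩
  · intro lam
    constructor
    · intro b y; fin_cases lam <;> fin_cases b <;> fin_cases y <;> norm_num
    · intro y; fin_cases lam <;> fin_cases y <;> norm_num
  · intro lam
    constructor
    · intro b y; fin_cases lam <;> fin_cases b <;> fin_cases y <;> norm_num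
    · intro y; fin_cases lam <;> fin_cases y <;> norm_num
  · intro a b x y
    fin_cases a <;> fin_cases b <;> fin_cases x <;> fin_cases y <;>
      simp [Pbox, Fin.sum_univ_two] <;> norm_num
end
end

section
/- The two-qubit state ρ = (1/2)(|00⟩⟨00| + |+1⟩⟨+1|) is not a classical-quantum state: there do not exist an orthonormal basis {e_0, e_1} of ℂ², weights q_0, q_1 ≥ 0 with q_0 + q_1 = 1, and qubit states τ_0, τ_1 such that ρ = q_0 · |e_0⟩⟨e_0| ⊗ τ_0 + q_1 · |e_1⟩⟨e_1| ⊗ τ_1. -/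
open Matrix Kronecker ComplexOrder

noncomputable section

def ket0 : Fin 2 → ℂ := ![1, 0]
def ket1 : Fin 2 → ℂ := ![0, 1]
def ketPlus : Fin 2 → ℂ := ![(Real.sqrt 2 : ℂ)⁻¹, (Real.sqrt 2 : ℂ)⁻¹]
def ketMinus : Fin 2 → ℂ := ![(Real.sqrt 2 : ℂ)⁻¹, -(Real.sqrt 2 : ℂ)⁻¹]

/-- The outer product `|v⟩⟨v|`. -/
def outer (v : Fin 2 → ℂ) : Matrix (Fin 2) (Fin 2) ℂ := Matrix.vecMulVec v (star v)

/-- The two-qubit state `ρ = (1/2)(|00⟩⟨00| + |+1⟩⟨+1|)`. -/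
def rhoState : Matrix (Fin 2 × Fin 2) (Fin 2 × Fin 2) ℂ :=
  (1/2 : ℂ) • (outer ket0 ⊗ₖ outer ket0 + outer ketPlus ⊗ₖ outer ket1)

/-- The eigenprojections of `σ_z`: `|0⟩⟨0|` (outcome 0, eigenvalue +1) and
`|1⟩⟨1|` (outcome 1, eigenvalue −1). -/
def projZ (a : Fin 2) : Matrix (Fin 2) (Fin 2) ℂ :=
  if a = 0 then outer ket0 else outer ket1

/-- The eigenprojections of `σ_x`: `|+⟩⟨+|` (outcome 0, eigenvalue +1) and
`|−⟩⟨−|` (outcome 1, eigenvalue −1). -/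
def projX (a : Fin 2) : Matrix (Fin 2) (Fin 2) ℂ :=
  if a = 0 then outer ketPlus else outer ketMinus

lemma sqrt_half' : (Real.sqrt 2 : ℂ)⁻¹ * (Real.sqrt 2 : ℂ)⁻¹ = 1/2 := by
  rw [← Complex.ofReal_inv, ← Complex.ofReal_mul, ← mul_inv,
    Real.mul_self_sqrt (by norm_num)]
  norm_num

lemma mul_star_self_nonneg' (a : ℂ) : 0 ≤ a * star a := by
  rw [Complex.star_def, Complex.mul_conj]
  exact_mod_cast Complex.normSq_nonneg a

lemma eq_zero_of_mul_star_self (a : ℂ) (h : a * star a = 0) : a = 0 := by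
  rcases mul_eq_zero.mp h with h | h
  · exact h
  · simpa using congrArg star h

/-- `ρ = (1/2)(|00⟩⟨00| + |+1⟩⟨+1|)` is not a classical-quantum
state. -/
theorem stmt_5 :
    ¬ ∃ (e : Fin 2 → Fin 2 → ℂ) (q : Fin 2 → ℝ)
        (τ : Fin 2 → Matrix (Fin 2) (Fin 2) ℂ),
      (∀ i j, (∑ k, star (e i k) * e j k) = if i = j then 1 else 0) ∧
      (∀ i, 0 ≤ q i) ∧ q 0 + q 1 = 1 ∧
      (∀ i, IsQubitState (τ i)) ∧
      rhoState = (q 0 : ℂ) • (outer (e 0) ⊗ₖ τ 0)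
        + (q 1 : ℂ) • (outer (e 1) ⊗ₖ τ 1) := by
  rintro ⟨e, q, τ, horth, hq, hqsum, hτ, heq⟩
  -- entry-wise form of the hypothesis
  have hE : ∀ i k j l : Fin 2, rhoState (i, k) (j, l) =
      (q 0 : ℂ) * (τ 0 k l) * (e 0 i * star (e 0 j))
        + (q 1 : ℂ) * (τ 1 k l) * (e 1 i * star (e 1 j)) := by
    intro i k j l
    rw [heq]
    simp [outer, vecMulVec_apply, kroneckerMap_apply]
    ring
  -- diagonal entries of qubit states are nonnegative
  have hdiag : ∀ i k, 0 ≤ τ i k k := by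
    intro i k
    have := (hτ i).1.dotProduct_mulVec_nonneg (Pi.single k 1)
    simpa [dotProduct, mulVec, Pi.single_apply, Finset.sum_ite_eq] using this
  set A0 := e 0 0 with hA0d
  set A1 := e 0 1 with hA1d
  set B0 := e 1 0 with hB0d
  set B1 := e 1 1 with hB1d
  set s : ℂ := (q 0 : ℂ) * τ 0 0 0 with hsd
  set t : ℂ := (q 1 : ℂ) * τ 1 0 0 with htd
  set u : ℂ := (q 0 : ℂ) * τ 0 1 1 with hud
  set v : ℂ := (q 1 : ℂ) * τ 1 1 1 with hvd
  have hs : 0 ≤ s := mul_nonneg (by exact_mod_cast hq 0) (hdiag 0 0)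
  have ht : 0 ≤ t := mul_nonneg (by exact_mod_cast hq 1) (hdiag 1 0)
  -- key entry equations
  have E1 : s * (A0 * star A0) + t * (B0 * star B0) = 1/2 := by
    have h := hE 0 0 0 0
    have hr : rhoState (0,0) (0,0) = 1/2 := by
      simp only [rhoState, Matrix.add_apply, Matrix.smul_apply, kroneckerMap_apply, outer, vecMulVec_apply]
      simp [ket0, ket1, ketPlus]
    rw [hr] at h; linear_combination -h
  have E4 : s * (A1 * star A1) + t * (B1 * star B1) = 0 := by
    have h := hE 1 0 1 0
    have hr : rhoState (1,0) (1,0) = 0 := by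
      simp only [rhoState, Matrix.add_apply, Matrix.smul_apply, kroneckerMap_apply, outer, vecMulVec_apply]
      simp [ket0, ket1, ketPlus]
    rw [hr] at h; linear_combination -h
  have E6 : u * (A0 * star A1) + v * (B0 * star B1) = 1/4 := by
    have h := hE 0 1 1 1
    have hr : rhoState (0,1) (1,1) = 1/4 := by
      simp only [rhoState, Matrix.add_apply, Matrix.smul_apply, kroneckerMap_apply, outer, vecMulVec_apply]
      simp [ket0, ket1, ketPlus]
      rw [sqrt_half']; norm_num
    rw [hr] at h; linear_combination -h
  -- orthonormality facts
  have hnorm0 : star A0 * A0 + star A1 * A1 = 1 := by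
    have := horth 0 0; simpa [Fin.sum_univ_two] using this
  have horth01 : star A0 * B0 + star A1 * B1 = 0 := by
    have := horth 0 1; simpa [Fin.sum_univ_two] using this
  -- both terms of E4 vanish
  have h4 := (add_eq_zero_iff_of_nonneg
    (mul_nonneg hs (mul_star_self_nonneg' A1))
    (mul_nonneg ht (mul_star_self_nonneg' B1))).mp E4
  rcases mul_eq_zero.mp h4.1 with hs0 | hA1z
  · -- s = 0
    rcases mul_eq_zero.mp h4.2 with ht0 | hB1z
    · -- t = 0 : contradicts E1
      rw [hs0, ht0] at E1; norm_num at E1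
    · -- B1 = 0
      have hB1 : B1 = 0 := eq_zero_of_mul_star_self _ hB1z
      have hB0ne : B0 ≠ 0 := by
        intro h0
        rw [hs0, h0] at E1
        norm_num at E1
      have hA0 : A0 = 0 := by
        have : star A0 * B0 = 0 := by
          have := horth01; rw [hB1] at this; simpa using this
        rcases mul_eq_zero.mp this with h | h
        · simpa using congrArg star h
        · exact absurd h hB0ne
      rw [hA0, hB1] at E6
      simp at E6
  · -- A1 = 0
    have hA1 : A1 = 0 := eq_zero_of_mul_star_self _ hA1z
    have hA0ne : A0 ≠ 0 := by
      intro h0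
      rw [hA1, h0] at hnorm0
      simp at hnorm0
    have hB0 : B0 = 0 := by
      have : star A0 * B0 = 0 := by
        have := horth01; rw [hA1] at this; simpa using this
      rcases mul_eq_zero.mp this with h | h
      · exact absurd (by simpa using congrArg star h) hA0ne
      · exact h
    rw [hA1, hB0] at E6
    simp at E6
end
end

section
/- There exists an assignment of the Pauli observables σ_z and σ_x to Alice's two inputs x ∈ {0,1} and to Bob's two inputs y ∈ {0,1} (with outcome 0 corresponding to the eigenvalue +1 eigenprojection and outcome 1 to the eigenvalue −1 eigenprojection, giving projections Π_{a|x} for Alice and Π_{b|y} for Bob) such that for all a,b,x,y ∈ {0,1}: Tr((Π_{a|x} ⊗ Π_{b|y}) ρ) = P(a,b|x,y), where ρ = (1/2)(|00⟩⟨00| + |+1⟩⟨+1|). In particular, the box P is produced by local projective measurements on a 2⊗2 (separable, one-way discordant) quantum state. -/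
open Matrix Kronecker ComplexOrder

noncomputable section

set_option maxHeartbeats 2000000 in
/-- there is an assignment of the Pauli observables `σ_z`, `σ_x`
to Alice's and Bob's inputs whose local projective measurements on
`ρ = (1/2)(|00⟩⟨00| + |+1⟩⟨+1|)` produce the box `P`. -/
theorem stmt_6 :
    ∃ PA PB : Fin 2 → Fin 2 → Matrix (Fin 2) (Fin 2) ℂ,
      (∀ x, (∀ a, PA a x = projZ a) ∨ (∀ a, PA a x = projX a)) ∧
      (∀ y, (∀ b, PB b y = projZ b) ∨ (∀ b, PB b y = projX b)) ∧
      ∀ a b x y : Fin 2,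
        ((PA a x ⊗ₖ PB b y) * rhoState).trace = (Pbox a b x y : ℂ) := by
  refine ⟨fun a x => if x = 0 then projZ a else projX a,
          fun b y => if y = 0 then projZ b else projX b, ?_, ?_, ?_⟩
  · intro x; fin_cases x
    · exact Or.inl (fun a => rfl)
    · exact Or.inr (fun a => rfl)
  · intro y; fin_cases y
    · exact Or.inl (fun b => rfl)
    · exact Or.inr (fun b => rfl)
  · intro a b x y
    have hs : ((Real.sqrt 2 : ℂ))^2 = 2 := by
      have : (Real.sqrt 2 : ℝ)^2 = 2 := Real.sq_sqrt (by norm_num)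
      exact_mod_cast congrArg (Complex.ofReal ·) this
    have h2 : ((Real.sqrt 2 : ℂ))⁻¹ * ((Real.sqrt 2 : ℂ))⁻¹ = 1/2 := by
      rw [← mul_inv, ← sq, hs]; norm_num
    have h4 : ((Real.sqrt 2 : ℂ))^4 = 4 := by
      rw [show ((Real.sqrt 2:ℂ))^4 = (((Real.sqrt 2:ℂ))^2)^2 by ring, hs]; norm_num
    have h6 : ((Real.sqrt 2 : ℂ))^6 = 8 := by
      rw [show ((Real.sqrt 2:ℂ))^6 = (((Real.sqrt 2:ℂ))^2)^3 by ring, hs]; norm_num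
    fin_cases a <;> fin_cases b <;> fin_cases x <;> fin_cases y <;>
      simp [Pbox, projZ, projX, rhoState, outer, ket0, ket1, ketPlus, ketMinus,
        Matrix.trace, Matrix.mul_apply, Matrix.kroneckerMap_apply, Matrix.vecMulVec_apply,
        Fin.sum_univ_succ, Fintype.sum_prod_type, Matrix.diag, -Matrix.cons_vecMulVec, -Matrix.vecMulVec_cons] <;> ring_nf <;>
      norm_num [h2, hs, h4, h6]
end
end

section
/- There do not exist weights p(0), p(1) ≥ 0 with p(0) + p(1) = 1, two DISTINCT deterministic one-party boxes D_0, D_1 ∈ {P_D^{00}, P_D^{01}, P_D^{10}, P_D^{11}} for Alice, and arbitrary conditional distributions Q_0, Q_1 for Bob such that P(a,b|x,y) = p(0) · D_0(a|x) · Q_0(b|y) + p(1) · D_1(a|x) · Q_1(b|y) for all a,b,x,y ∈ {0,1}. -/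
open Matrix Kronecker ComplexOrder

noncomputable section

set_option maxHeartbeats 1000000 in
/-- `P` has no LHV–LHS-type decomposition with two distinct
deterministic boxes for Alice and arbitrary conditional distributions for Bob. -/
theorem stmt_7 :
    ¬ ∃ (p0 p1 : ℝ) (D0 D1 Q0 Q1 : Fin 2 → Fin 2 → ℝ),
      0 ≤ p0 ∧ 0 ≤ p1 ∧ p0 + p1 = 1 ∧
      D0 ∈ ({PD 0 0, PD 0 1, PD 1 0, PD 1 1} : Set (Fin 2 → Fin 2 → ℝ)) ∧
      D1 ∈ ({PD 0 0, PD 0 1, PD 1 0, PD 1 1} : Set (Fin 2 → Fin 2 → ℝ)) ∧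
      D0 ≠ D1 ∧
      IsCondDistrib Q0 ∧ IsCondDistrib Q1 ∧
      ∀ a b x y : Fin 2, Pbox a b x y =
        p0 * D0 a x * Q0 b y + p1 * D1 a x * Q1 b y := by
  rintro ⟨p0, p1, D0, D1, Q0, Q1, hp0, hp1, hsum, hD0, hD1, hne, hQ0, hQ1, h⟩
  have e1 := h 1 0 0 0
  have e2 := h 1 1 0 0
  have e3 := h 1 0 1 0
  have e4 := h 1 1 1 0
  have m0 := hQ0.2 0
  have m1 := hQ1.2 0
  have n00 := hQ0.1 0 0
  have n01 := hQ0.1 1 0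
  have n10 := hQ1.1 0 0
  have n11 := hQ1.1 1 0
  simp only [Set.mem_insert_iff, Set.mem_singleton_iff] at hD0 hD1
  rcases hD0 with rfl | rfl | rfl | rfl <;> rcases hD1 with rfl | rfl | rfl | rfl <;>
    first
      | exact hne rfl
      | (simp only [Pbox, PD,
           show (0*0+0 : Fin 2) = 0 by decide, show (0*1+0 : Fin 2) = 0 by decide,
           show (1*0+0 : Fin 2) = 0 by decide, show (1*1+0 : Fin 2) = 1 by decide,
           show (0*0+1 : Fin 2) = 1 by decide, show (0*1+1 : Fin 2) = 1 by decide,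
           show (1*0+1 : Fin 2) = 1 by decide, show (1*1+1 : Fin 2) = 0 by decide] at e1 e2 e3 e4
         all_goals norm_num [-mul_eq_zero, -zero_eq_mul] at e1
         all_goals norm_num [-mul_eq_zero, -zero_eq_mul] at e2
         all_goals norm_num [-mul_eq_zero, -zero_eq_mul] at e3
         all_goals norm_num [-mul_eq_zero, -zero_eq_mul] at e4
         all_goals nlinarith [e1, e2, e3, e4, m0, m1, n00, n01, n10, n11, hp0, hp1, hsum,
           mul_nonneg hp0 n00, mul_nonneg hp0 n01, mul_nonneg hp1 n10, mul_nonneg hp1 n11])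
end
end

section
/- There do not exist strictly positive weights p(0), p(1), p(2), p(3) with Σ_λ p(λ) = 1 and conditional distributions Q_0, Q_1, Q_2, Q_3 for Bob satisfying Q_0 = Q_1 = Q_2, such that P(a,b|x,y) = p(0) · P_D^{00}(a|x) · Q_0(b|y) + p(1) · P_D^{01}(a|x) · Q_1(b|y) + p(2) · P_D^{10}(a|x) · Q_2(b|y) + p(3) · P_D^{11}(a|x) · Q_3(b|y) for all a,b,x,y ∈ {0,1}. -/
open Matrix Kronecker ComplexOrder

noncomputable section

/-- `P` has no dimension-4 deterministic-Alice LHV–LHS-type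
decomposition with Bob's boxes satisfying `Q₀ = Q₁ = Q₂`. -/
theorem stmt_9 :
    ¬ ∃ (p0 p1 p2 p3 : ℝ) (Q0 Q1 Q2 Q3 : Fin 2 → Fin 2 → ℝ),
      0 < p0 ∧ 0 < p1 ∧ 0 < p2 ∧ 0 < p3 ∧ p0 + p1 + p2 + p3 = 1 ∧
      IsCondDistrib Q0 ∧ IsCondDistrib Q1 ∧ IsCondDistrib Q2 ∧ IsCondDistrib Q3 ∧
      Q0 = Q1 ∧ Q1 = Q2 ∧
      ∀ a b x y : Fin 2, Pbox a b x y =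
        p0 * PD 0 0 a x * Q0 b y + p1 * PD 0 1 a x * Q1 b y
        + p2 * PD 1 0 a x * Q2 b y + p3 * PD 1 1 a x * Q3 b y := by
  rintro ⟨p0, p1, p2, p3, Q0, Q1, Q2, Q3, hp0, hp1, hp2, hp3, hsum,
    ⟨hQ0n, hQ0s⟩, _, _, ⟨hQ3n, _⟩, rfl, rfl, h⟩
  have h1 := h 1 0 0 0
  have h2 := h 1 1 1 0
  simp only [Pbox, PD] at h1 h2
  norm_num at h1 h2
  have hn00 := hQ0n 0 0
  have hn10 := hQ0n 1 0
  have hn3 := hQ3n 0 0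
  have hs := hQ0s 0
  have hz : Q0 0 0 = 0 := by
    nlinarith [mul_nonneg hp3.le hn3, mul_nonneg hp1.le hn00]
  nlinarith [mul_pos hp1 (show (0:ℝ) < Q0 1 0 by linarith), mul_nonneg hp2.le hn10]
end
end

section
/- There do not exist strictly positive weights p(0), p(1), p(2), p(3) with Σ_λ p(λ) = 1 and conditional distributions Q_0, Q_1, Q_2, Q_3 for Bob satisfying Q_0 = Q_1 = Q_3, such that P(a,b|x,y) = p(0) · P_D^{00}(a|x) · Q_0(b|y) + p(1) · P_D^{01}(a|x) · Q_1(b|y) + p(2) · P_D^{10}(a|x) · Q_2(b|y) + p(3) · P_D^{11}(a|x) · Q_3(b|y) for all a,b,x,y ∈ {0,1}. -/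
open Matrix Kronecker ComplexOrder

noncomputable section

/-- `P` has no dimension-4 deterministic-Alice LHV–LHS-type
decomposition with Bob's boxes satisfying `Q₀ = Q₁ = Q₃`. -/
theorem stmt_10 :
    ¬ ∃ (p0 p1 p2 p3 : ℝ) (Q0 Q1 Q2 Q3 : Fin 2 → Fin 2 → ℝ),
      0 < p0 ∧ 0 < p1 ∧ 0 < p2 ∧ 0 < p3 ∧ p0 + p1 + p2 + p3 = 1 ∧
      IsCondDistrib Q0 ∧ IsCondDistrib Q1 ∧ IsCondDistrib Q2 ∧ IsCondDistrib Q3 ∧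
      Q0 = Q1 ∧ Q1 = Q3 ∧
      ∀ a b x y : Fin 2, Pbox a b x y =
        p0 * PD 0 0 a x * Q0 b y + p1 * PD 0 1 a x * Q1 b y
        + p2 * PD 1 0 a x * Q2 b y + p3 * PD 1 1 a x * Q3 b y := by
  rintro ⟨p0, p1, p2, p3, Q0, Q1, Q2, Q3, h0, h1, h2, h3, hs,
    ⟨c0n, c0s⟩, _, ⟨c2n, _⟩, _, rfl, rfl, hP⟩
  have e1 := hP 1 0 0 0
  have e2 := hP 1 1 1 0
  have hsum := c0s 0
  norm_num [Pbox, PD, show (1:Fin 2) ≠ 0 by decide, show (0:Fin 2) ≠ 1 by decide, show (1:Fin 2) = 2 ↔ False by decide] at e1 e2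
  nlinarith [c0n 0 0, c0n 1 0, c2n 1 0, mul_nonneg h2.le (c2n 1 0),
    mul_nonneg h1.le (c0n 1 0), mul_nonneg h1.le (c0n 0 0), mul_nonneg h3.le (c0n 0 0)]
end
end

section
/- There do not exist strictly positive weights p(0), p(1), p(2), p(3) with Σ_λ p(λ) = 1 and conditional distributions Q_0, Q_1, Q_2, Q_3 for Bob satisfying Q_0 = Q_2 = Q_3, such that P(a,b|x,y) = p(0) · P_D^{00}(a|x) · Q_0(b|y) + p(1) · P_D^{01}(a|x) · Q_1(b|y) + p(2) · P_D^{10}(a|x) · Q_2(b|y) + p(3) · P_D^{11}(a|x) · Q_3(b|y) for all a,b,x,y ∈ {0,1}. -/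
open Matrix Kronecker ComplexOrder

noncomputable section

/-- `P` has no dimension-4 deterministic-Alice LHV–LHS-type
decomposition with Bob's boxes satisfying `Q₀ = Q₂ = Q₃`. -/
theorem stmt_11 :
    ¬ ∃ (p0 p1 p2 p3 : ℝ) (Q0 Q1 Q2 Q3 : Fin 2 → Fin 2 → ℝ),
      0 < p0 ∧ 0 < p1 ∧ 0 < p2 ∧ 0 < p3 ∧ p0 + p1 + p2 + p3 = 1 ∧
      IsCondDistrib Q0 ∧ IsCondDistrib Q1 ∧ IsCondDistrib Q2 ∧ IsCondDistrib Q3 ∧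
      Q0 = Q2 ∧ Q2 = Q3 ∧
      ∀ a b x y : Fin 2, Pbox a b x y =
        p0 * PD 0 0 a x * Q0 b y + p1 * PD 0 1 a x * Q1 b y
        + p2 * PD 1 0 a x * Q2 b y + p3 * PD 1 1 a x * Q3 b y := by
  rintro ⟨p0, p1, p2, p3, Q0, Q1, Q2, Q3, hp0, hp1, hp2, hp3, hsum,
    hQ0, hQ1, hQ2, hQ3, _, _, hP⟩
  have h1 := hP 1 0 0 0
  have h2 := hP 1 1 1 0
  simp only [Pbox, PD] at h1 h2
  norm_num [show (1:Fin 2) ≠ 2 from by decide] at h1 h2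
  nlinarith [hQ1.2 0, hQ1.1 0 0, hQ1.1 1 0, hQ2.1 1 0, hQ3.1 0 0,
    mul_nonneg hp3.le (hQ3.1 0 0), mul_nonneg hp2.le (hQ2.1 1 0),
    mul_nonneg hp1.le (hQ1.1 0 0), mul_nonneg hp1.le (hQ1.1 1 0)]
end
end

section
/- There do not exist strictly positive weights p(0), p(1), p(2), p(3) with Σ_λ p(λ) = 1 and conditional distributions Q_0, Q_1, Q_2, Q_3 for Bob satisfying Q_1 = Q_2 = Q_3, such that P(a,b|x,y) = p(0) · P_D^{00}(a|x) · Q_0(b|y) + p(1) · P_D^{01}(a|x) · Q_1(b|y) + p(2) · P_D^{10}(a|x) · Q_2(b|y) + p(3) · P_D^{11}(a|x) · Q_3(b|y) for all a,b,x,y ∈ {0,1}. -/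
open Matrix Kronecker ComplexOrder

noncomputable section

/-- `P` has no dimension-4 deterministic-Alice LHV–LHS-type
decomposition with Bob's boxes satisfying `Q₁ = Q₂ = Q₃`. -/
theorem stmt_12 :
    ¬ ∃ (p0 p1 p2 p3 : ℝ) (Q0 Q1 Q2 Q3 : Fin 2 → Fin 2 → ℝ),
      0 < p0 ∧ 0 < p1 ∧ 0 < p2 ∧ 0 < p3 ∧ p0 + p1 + p2 + p3 = 1 ∧
      IsCondDistrib Q0 ∧ IsCondDistrib Q1 ∧ IsCondDistrib Q2 ∧ IsCondDistrib Q3 ∧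
      Q1 = Q2 ∧ Q2 = Q3 ∧
      ∀ a b x y : Fin 2, Pbox a b x y =
        p0 * PD 0 0 a x * Q0 b y + p1 * PD 0 1 a x * Q1 b y
        + p2 * PD 1 0 a x * Q2 b y + p3 * PD 1 1 a x * Q3 b y := by
  rintro ⟨p0, p1, p2, p3, Q0, Q1, Q2, Q3, hp0, hp1, hp2, hp3, hsum,
    hQ0, hQ1, hQ2, hQ3, h12, h23, h⟩
  subst h12; subst h23
  have e1 := h 1 0 0 0
  have e2 := h 1 1 1 0
  simp [Pbox, PD] at e1 e2
  have hs := hQ1.2 0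
  have n1 := hQ1.1 0 0
  have n2 := hQ1.1 1 0
  have n0a := hQ0.1 0 0
  have n0b := hQ0.1 1 0
  nlinarith [mul_nonneg hp1.le n1, mul_nonneg hp3.le n1, mul_nonneg hp1.le n2, mul_nonneg hp2.le n2]
end
end

section
/- There do not exist strictly positive weights p(0), p(1), p(2), p(3) with Σ_λ p(λ) = 1 and conditional distributions Q_0, Q_1, Q_2, Q_3 for Bob satisfying Q_0 = Q_1 and Q_2 = Q_3, such that P(a,b|x,y) = p(0) · P_D^{00}(a|x) · Q_0(b|y) + p(1) · P_D^{01}(a|x) · Q_1(b|y) + p(2) · P_D^{10}(a|x) · Q_2(b|y) + p(3) · P_D^{11}(a|x) · Q_3(b|y) for all a,b,x,y ∈ {0,1}. -/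
open Matrix Kronecker ComplexOrder

noncomputable section

/-- `P` has no dimension-4 deterministic-Alice LHV–LHS-type
decomposition with Bob's boxes satisfying `Q₀ = Q₁` and `Q₂ = Q₃`. -/
theorem stmt_13 :
    ¬ ∃ (p0 p1 p2 p3 : ℝ) (Q0 Q1 Q2 Q3 : Fin 2 → Fin 2 → ℝ),
      0 < p0 ∧ 0 < p1 ∧ 0 < p2 ∧ 0 < p3 ∧ p0 + p1 + p2 + p3 = 1 ∧
      IsCondDistrib Q0 ∧ IsCondDistrib Q1 ∧ IsCondDistrib Q2 ∧ IsCondDistrib Q3 ∧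
      Q0 = Q1 ∧ Q2 = Q3 ∧
      ∀ a b x y : Fin 2, Pbox a b x y =
        p0 * PD 0 0 a x * Q0 b y + p1 * PD 0 1 a x * Q1 b y
        + p2 * PD 1 0 a x * Q2 b y + p3 * PD 1 1 a x * Q3 b y := by
  rintro ⟨p0,p1,p2,p3,Q0,Q1,Q2,Q3,hp0,hp1,hp2,hp3,hsum,hQ0,hQ1,hQ2,hQ3,h01,h23,h⟩
  have h1 := h 1 0 0 0
  have h2 := h 1 1 1 0
  simp only [Pbox, PD] at h1 h2
  norm_num at h1 h2
  -- h1 : 0 = p1 * Q1 0 0 + p3 * Q3 0 0, h2 : 0 = p1 * Q1 1 0 + p2 * Q2 1 0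
  have hQ1nn := hQ1.1
  have hQ100 : Q1 0 0 = 0 := by nlinarith [hQ1nn 0 0, hQ3.1 0 0]
  have hQ110 : Q1 1 0 = 1 := by have := hQ1.2 0; linarith
  nlinarith [hQ2.1 1 0]
end
end

section
/- There do not exist strictly positive weights p(0), p(1), p(2), p(3) with Σ_λ p(λ) = 1 and conditional distributions Q_0, Q_1, Q_2, Q_3 for Bob satisfying Q_0 = Q_2 and Q_1 = Q_3, such that P(a,b|x,y) = p(0) · P_D^{00}(a|x) · Q_0(b|y) + p(1) · P_D^{01}(a|x) · Q_1(b|y) + p(2) · P_D^{10}(a|x) · Q_2(b|y) + p(3) · P_D^{11}(a|x) · Q_3(b|y) for all a,b,x,y ∈ {0,1}. -/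
open Matrix Kronecker ComplexOrder

noncomputable section

/-- `P` has no dimension-4 deterministic-Alice LHV–LHS-type
decomposition with Bob's boxes satisfying `Q₀ = Q₂` and `Q₁ = Q₃`. -/
theorem stmt_14 :
    ¬ ∃ (p0 p1 p2 p3 : ℝ) (Q0 Q1 Q2 Q3 : Fin 2 → Fin 2 → ℝ),
      0 < p0 ∧ 0 < p1 ∧ 0 < p2 ∧ 0 < p3 ∧ p0 + p1 + p2 + p3 = 1 ∧
      IsCondDistrib Q0 ∧ IsCondDistrib Q1 ∧ IsCondDistrib Q2 ∧ IsCondDistrib Q3 ∧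
      Q0 = Q2 ∧ Q1 = Q3 ∧
      ∀ a b x y : Fin 2, Pbox a b x y =
        p0 * PD 0 0 a x * Q0 b y + p1 * PD 0 1 a x * Q1 b y
        + p2 * PD 1 0 a x * Q2 b y + p3 * PD 1 1 a x * Q3 b y := by
  rintro ⟨p0, p1, p2, p3, Q0, Q1, Q2, Q3, hp0, hp1, hp2, hp3, hsum,
    hQ0, hQ1, hQ2, hQ3, rfl, rfl, h⟩
  have e1 := h 1 0 0 0
  have e2 := h 0 1 0 0
  have e3 := h 1 1 1 0
  simp [Pbox, PD, Fin.ext_iff] at e1 e2 e3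
  have h10 := hQ1.1 0 0
  have h1s := hQ1.2 0
  have h00 := hQ0.1 1 0
  nlinarith [mul_pos hp1 hp2, mul_nonneg hp1.le h10, mul_nonneg hp3.le h10,
    mul_nonneg hp2.le h00, mul_nonneg hp1.le h00]
end
end

section
/- There do not exist strictly positive weights p(0), p(1), p(2), p(3) with Σ_λ p(λ) = 1 and conditional distributions Q_0, Q_1, Q_2, Q_3 for Bob satisfying Q_0 = Q_3 and Q_1 = Q_2, such that P(a,b|x,y) = p(0) · P_D^{00}(a|x) · Q_0(b|y) + p(1) · P_D^{01}(a|x) · Q_1(b|y) + p(2) · P_D^{10}(a|x) · Q_2(b|y) + p(3) · P_D^{11}(a|x) · Q_3(b|y) for all a,b,x,y ∈ {0,1}. -/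
open Matrix Kronecker ComplexOrder

noncomputable section

/-- `P` has no dimension-4 deterministic-Alice LHV–LHS-type
decomposition with Bob's boxes satisfying `Q₀ = Q₃` and `Q₁ = Q₂`. -/
theorem stmt_15 :
    ¬ ∃ (p0 p1 p2 p3 : ℝ) (Q0 Q1 Q2 Q3 : Fin 2 → Fin 2 → ℝ),
      0 < p0 ∧ 0 < p1 ∧ 0 < p2 ∧ 0 < p3 ∧ p0 + p1 + p2 + p3 = 1 ∧
      IsCondDistrib Q0 ∧ IsCondDistrib Q1 ∧ IsCondDistrib Q2 ∧ IsCondDistrib Q3 ∧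
      Q0 = Q3 ∧ Q1 = Q2 ∧
      ∀ a b x y : Fin 2, Pbox a b x y =
        p0 * PD 0 0 a x * Q0 b y + p1 * PD 0 1 a x * Q1 b y
        + p2 * PD 1 0 a x * Q2 b y + p3 * PD 1 1 a x * Q3 b y := by
  rintro ⟨p0, p1, p2, p3, Q0, Q1, Q2, Q3, hp0, hp1, hp2, hp3, hsum,
    ⟨hQ0pos, hQ0sum⟩, ⟨hQ1pos, hQ1sum⟩, ⟨hQ2pos, hQ2sum⟩, ⟨hQ3pos, hQ3sum⟩,
    h03, h12, hdec⟩
  have e1 := hdec 1 0 0 0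
  have e2 := hdec 1 1 1 0
  simp only [Pbox, PD] at e1 e2
  norm_num [show (2:Fin 2) = 0 from rfl] at e1 e2
  have hQ1a := hQ1pos 0 0
  have hQ3a := hQ3pos 0 0
  have hQ100 : Q1 0 0 = 0 := by nlinarith
  have hQ110 : Q1 1 0 = 1 := by have := hQ1sum 0; linarith
  have hQ2b := hQ2pos 1 0
  nlinarith
end
end

section
/- There do not exist three pairwise distinct deterministic one-party boxes D_0, D_1, D_2 ∈ {P_D^{00}, P_D^{01}, P_D^{10}, P_D^{11}} for Alice, strictly positive weights p(0), p(1), p(2) with Σ_λ p(λ) = 1, and conditional distributions Q_0, Q_1, Q_2 for Bob with at least two of Q_0, Q_1, Q_2 equal, such that P(a,b|x,y) = Σ_{λ∈{0,1,2}} p(λ) · D_λ(a|x) · Q_λ(b|y) for all a,b,x,y ∈ {0,1}. Consequently, no LHV-LHS decomposition of P with hidden-variable dimension 3 and deterministic Alice strategies can be reduced to dimension 2 by merging values of the hidden variable with equal Bob boxes. -/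
open Matrix Kronecker ComplexOrder

noncomputable section

/-- Core argument for the surviving triple `{PD00, PD10, PD11}`:
`pa, qa` belong to `PD00`, `pb, qb` to `PD10`, `pc, qc` to `PD11`,
where `q• = Q•(0|0)`. -/
lemma core_aux (pa pb pc qa qb qc : ℝ)
    (hpa : 0 < pa) (hpb : 0 < pb) (hpc : 0 < pc)
    (hs : pa + pb + pc = 1)
    (h1 : 1/2 = pa * qa + pb * qb)
    (h2 : 1/4 = pa * (1 - qa) + pb * (1 - qb))
    (h3 : 0 = pc * qc)
    (h5 : 1/4 = pa * qa + pc * qc)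
    (h6 : 1/2 = pa * (1 - qa) + pc * (1 - qc))
    (h7 : 1/4 = pb * qb)
    (heq : qa = qb ∨ qa = qc ∨ qb = qc) : False := by
  have hA : pa = 1/2 := by nlinarith
  have hB : pb = 1/4 := by nlinarith
  have hC : pc = 1/4 := by nlinarith
  subst hA; subst hB; subst hC
  have hqc : qc = 0 := by linarith
  have hqb : qb = 1 := by linarith
  have hqa : qa = 1/2 := by linarith
  rcases heq with h|h|h <;> linarith

set_option maxHeartbeats 2000000 in
/-- `P` has no dimension-3 deterministic-Alice LHV–LHS-type
decomposition (with pairwise distinct deterministic Alice boxes) in which at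
least two of Bob's boxes coincide. -/
theorem stmt_16 :
    ¬ ∃ (p0 p1 p2 : ℝ) (D0 D1 D2 Q0 Q1 Q2 : Fin 2 → Fin 2 → ℝ),
      D0 ∈ ({PD 0 0, PD 0 1, PD 1 0, PD 1 1} : Set (Fin 2 → Fin 2 → ℝ)) ∧
      D1 ∈ ({PD 0 0, PD 0 1, PD 1 0, PD 1 1} : Set (Fin 2 → Fin 2 → ℝ)) ∧
      D2 ∈ ({PD 0 0, PD 0 1, PD 1 0, PD 1 1} : Set (Fin 2 → Fin 2 → ℝ)) ∧
      D0 ≠ D1 ∧ D0 ≠ D2 ∧ D1 ≠ D2 ∧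
      0 < p0 ∧ 0 < p1 ∧ 0 < p2 ∧ p0 + p1 + p2 = 1 ∧
      IsCondDistrib Q0 ∧ IsCondDistrib Q1 ∧ IsCondDistrib Q2 ∧
      (Q0 = Q1 ∨ Q0 = Q2 ∨ Q1 = Q2) ∧
      ∀ a b x y : Fin 2, Pbox a b x y =
        p0 * D0 a x * Q0 b y + p1 * D1 a x * Q1 b y + p2 * D2 a x * Q2 b y := by
  rintro ⟨p0, p1, p2, D0, D1, D2, Q0, Q1, Q2, hD0, hD1, hD2, hd01, hd02, hd12,
    hp0, hp1, hp2, hps, hQ0, hQ1, hQ2, hQeq, hP⟩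
  simp only [Set.mem_insert_iff, Set.mem_singleton_iff] at hD0 hD1 hD2
  have e0 : Q0 1 0 = 1 - Q0 0 0 := by have := hQ0.2 0; linarith
  have e1 : Q1 1 0 = 1 - Q1 0 0 := by have := hQ1.2 0; linarith
  have e2 : Q2 1 0 = 1 - Q2 0 0 := by have := hQ2.2 0; linarith
  have n0 : 0 ≤ Q0 0 0 := hQ0.1 0 0
  have n1 : 0 ≤ Q1 0 0 := hQ1.1 0 0
  have n2 : 0 ≤ Q2 0 0 := hQ2.1 0 0
  have m0 : Q0 0 0 ≤ 1 := by have := hQ0.1 1 0; linarith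
  have m1 : Q1 0 0 ≤ 1 := by have := hQ1.1 1 0; linarith
  have m2 : Q2 0 0 ≤ 1 := by have := hQ2.1 1 0; linarith
  rcases hD0 with rfl | rfl | rfl | rfl <;>
    rcases hD1 with rfl | rfl | rfl | rfl <;>
      rcases hD2 with rfl | rfl | rfl | rfl <;>
        first
          | exact hd01 rfl
          | exact hd02 rfl
          | exact hd12 rfl
          | · have k1 := hP 0 0 0 0; have k2 := hP 0 1 0 0
              have k3 := hP 1 0 0 0; have k4 := hP 1 1 0 0
              have k5 := hP 0 0 1 0; have k6 := hP 0 1 1 0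
              have k7 := hP 1 0 1 0; have k8 := hP 1 1 1 0
              simp only [Pbox, PD, Fin.reduceEq, Fin.reduceAdd, Fin.reduceMul, if_true, if_false,
                eq_self_iff_true, one_mul, mul_one, mul_zero, zero_mul, add_zero, zero_add,
                e0, e1, e2] at k1 k2 k3 k4 k5 k6 k7 k8
              first
                | linarith
                | exact core_aux p0 p1 p2 (Q0 0 0) (Q1 0 0) (Q2 0 0) hp0 hp1 hp2
                    (by linarith) (by linarith) (by linarith) (by linarith) (by linarith)
                    (by linarith) (by linarith) (by rcases hQeq with h|h|h <;> simp [h])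
                | exact core_aux p0 p2 p1 (Q0 0 0) (Q2 0 0) (Q1 0 0) hp0 hp2 hp1
                    (by linarith) (by linarith) (by linarith) (by linarith) (by linarith)
                    (by linarith) (by linarith) (by rcases hQeq with h|h|h <;> simp [h])
                | exact core_aux p1 p0 p2 (Q1 0 0) (Q0 0 0) (Q2 0 0) hp1 hp0 hp2
                    (by linarith) (by linarith) (by linarith) (by linarith) (by linarith)
                    (by linarith) (by linarith) (by rcases hQeq with h|h|h <;> simp [h])
                | exact core_aux p1 p2 p0 (Q1 0 0) (Q2 0 0) (Q0 0 0) hp1 hp2 hp0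
                    (by linarith) (by linarith) (by linarith) (by linarith) (by linarith)
                    (by linarith) (by linarith) (by rcases hQeq with h|h|h <;> simp [h])
                | exact core_aux p2 p0 p1 (Q2 0 0) (Q0 0 0) (Q1 0 0) hp2 hp0 hp1
                    (by linarith) (by linarith) (by linarith) (by linarith) (by linarith)
                    (by linarith) (by linarith) (by rcases hQeq with h|h|h <;> simp [h])
                | exact core_aux p2 p1 p0 (Q2 0 0) (Q1 0 0) (Q0 0 0) hp2 hp1 hp0
                    (by linarith) (by linarith) (by linarith) (by linarith) (by linarith)
                    (by linarith) (by linarith) (by rcases hQeq with h|h|h <;> simp [h])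
end
end

section
/- There do not exist strictly positive weights p(0), p(1), p(2) with Σ_λ p(λ) = 1 and conditional distributions Q_0, Q_1, Q_2 for Bob satisfying Q_1 = Q_2, such that P(a,b|x,y) = p(0) · P_D^{00}(a|x) · Q_0(b|y) + p(1) · P_D^{01}(a|x) · Q_1(b|y) + p(2) · P_D^{10}(a|x) · Q_2(b|y) for all a,b,x,y ∈ {0,1}. -/
open Matrix Kronecker ComplexOrder

noncomputable section

/-- `P` has no dimension-3 deterministic-Alice LHV–LHS-type
decomposition with Bob's boxes satisfying `Q1 = Q2`. -/
theorem stmt_18 :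
    ¬ ∃ (p0 p1 p2 : ℝ) (Q0 Q1 Q2 : Fin 2 → Fin 2 → ℝ),
      0 < p0 ∧ 0 < p1 ∧ 0 < p2 ∧ p0 + p1 + p2 = 1 ∧
      IsCondDistrib Q0 ∧ IsCondDistrib Q1 ∧ IsCondDistrib Q2 ∧
      Q1 = Q2 ∧
      ∀ a b x y : Fin 2, Pbox a b x y =
        p0 * PD 0 0 a x * Q0 b y + p1 * PD 0 1 a x * Q1 b y
        + p2 * PD 1 0 a x * Q2 b y := by
  rintro ⟨p0, p1, p2, Q0, Q1, Q2, hp0, hp1, hp2, -, -, -, -, rfl, h⟩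
  have h1 := h 1 0 0 0
  have h2 := h 1 0 1 0
  simp only [Pbox, PD] at h1 h2
  norm_num at h1 h2
  have hq : Q1 0 0 = 0 := h1.resolve_left hp1.ne'
  rw [hq] at h2
  linarith
end
end

section
/- There do not exist strictly positive weights p(0), p(1), p(2) with Σ_λ p(λ) = 1 and conditional distributions Q_0, Q_1, Q_2 for Bob satisfying Q_0 = Q_2, such that P(a,b|x,y) = p(0) · P_D^{00}(a|x) · Q_0(b|y) + p(1) · P_D^{01}(a|x) · Q_1(b|y) + p(2) · P_D^{10}(a|x) · Q_2(b|y) for all a,b,x,y ∈ {0,1}. -/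
open Matrix Kronecker ComplexOrder

noncomputable section

/-- `P` has no dimension-3 deterministic-Alice LHV–LHS-type
decomposition with Bob's boxes satisfying `Q0 = Q2`. -/
theorem stmt_19 :
    ¬ ∃ (p0 p1 p2 : ℝ) (Q0 Q1 Q2 : Fin 2 → Fin 2 → ℝ),
      0 < p0 ∧ 0 < p1 ∧ 0 < p2 ∧ p0 + p1 + p2 = 1 ∧
      IsCondDistrib Q0 ∧ IsCondDistrib Q1 ∧ IsCondDistrib Q2 ∧
      Q0 = Q2 ∧
      ∀ a b x y : Fin 2, Pbox a b x y =
        p0 * PD 0 0 a x * Q0 b y + p1 * PD 0 1 a x * Q1 b y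
        + p2 * PD 1 0 a x * Q2 b y := by
  rintro ⟨p0, p1, p2, Q0, Q1, Q2, h0, h1, h2, hsum, hQ0, hQ1, hQ2, hQeq, heq⟩
  have e1 := heq 1 0 0 0
  have e2 := heq 1 1 1 0
  have hs := hQ1.2 0
  have n1 := hQ1.1 0 0
  have n2 := hQ2.1 1 0
  simp [Pbox, PD] at e1 e2
  rcases e1 with e1 | e1
  · exact absurd e1 h1.ne'
  · nlinarith [mul_nonneg h2.le n2]
end
end
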